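/- Let f : ℝ^n → ℂ be a trigonometric polynomial of degree at most m, i.e. f(φ) = Σ_{s∈S} f_s e^{i s·φ} for a finite set S ⊂ ℤ^n with |s|₁ ≤ m for all s ∈ S. Then (1/T) ∫₀^T f(φ + tW) dt converges, as T → ∞, to the resonant average ⟨f⟩_W(φ) = ∫_{[0,2π]^{n−r}} f(φ + Σ_{j=r+1}^n θ_j η^j) ∏_{j=r+1}^n dθ_j/(2π), uniformly in φ ∈ ℝ^n. -/

import Mathlib

open scoped BigOperators
open MeasureTheory Filter

lemma aux_norm_exp (x : ℝ) : ‖Complex.exp (Complex.I * x)‖ = 1 := by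
  rw [Complex.norm_exp]
  simp [Complex.mul_re]

lemma aux_time_avg (a : ℝ) :
    Tendsto (fun T : ℝ => (1/T : ℂ) * ∫ t in (0:ℝ)..T, Complex.exp (Complex.I * a * t)) atTop
      (nhds (if a = 0 then 1 else 0)) := by
  rcases eq_or_ne a 0 with h | h
  · simp only [h, Complex.ofReal_zero, mul_zero, zero_mul, Complex.exp_zero, if_pos rfl]
    have hconst : Tendsto (fun _ : ℝ => (1:ℂ)) atTop (nhds 1) := tendsto_const_nhds
    refine Tendsto.congr' ?_ hconst
    filter_upwards [eventually_ne_atTop (0:ℝ)] with T hT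
    rw [intervalIntegral.integral_const]
    have hT' : (T : ℂ) ≠ 0 := by exact_mod_cast hT
    simp only [sub_zero, smul_eq_mul]
    field_simp
    rw [Complex.real_smul, mul_one]
  · have hc : Complex.I * a ≠ 0 := by
      simp [Complex.I_ne_zero, Complex.ofReal_ne_zero.mpr h]
    rw [if_neg h]
    apply squeeze_zero_norm' (a := fun T : ℝ => (2 / ‖(Complex.I * a : ℂ)‖) / T)
    · filter_upwards [eventually_gt_atTop (0:ℝ)] with T hT
      rw [integral_exp_mul_complex hc]
      have h1 : ‖Complex.exp (Complex.I * a * ((T:ℝ):ℂ)) - Complex.exp (Complex.I * a * ((0:ℝ):ℂ))‖ ≤ 2 := by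
        refine (norm_sub_le _ _).trans ?_
        have e1 : ‖Complex.exp (Complex.I * (a:ℂ) * ((T:ℝ):ℂ))‖ = 1 := by
          rw [mul_assoc, ← Complex.ofReal_mul]; exact aux_norm_exp _
        have e2 : ‖Complex.exp (Complex.I * (a:ℂ) * ((0:ℝ):ℂ))‖ = 1 := by
          rw [mul_assoc, ← Complex.ofReal_mul]; exact aux_norm_exp _
        rw [e1, e2]; norm_num
      rw [norm_mul, norm_div, norm_div, norm_one, Complex.norm_real,
        Real.norm_of_nonneg hT.le]
      have hrw : 2 / ‖(Complex.I * (a:ℂ))‖ / T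
          = 1 / T * (2 / ‖(Complex.I * (a:ℂ))‖) := by ring
      rw [hrw]
      gcongr
    · exact Tendsto.div_atTop tendsto_const_nhds tendsto_id

lemma aux_circle (b : ℤ) :
    (∫ θ in Set.Icc (0:ℝ) (2*Real.pi), Complex.exp (Complex.I * b * θ))
      = if b = 0 then ((2*Real.pi : ℝ) : ℂ) else 0 := by
  have h2pi : (0:ℝ) ≤ 2 * Real.pi := by positivity
  rw [MeasureTheory.integral_Icc_eq_integral_Ioc,
    ← intervalIntegral.integral_of_le h2pi]
  rcases eq_or_ne b 0 with h | h
  · simp [h]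
  · have hc : Complex.I * b ≠ 0 := by
      simp [Complex.I_ne_zero, h]
    rw [if_neg h, integral_exp_mul_complex hc]
    have : Complex.exp (Complex.I * b * ((2*Real.pi : ℝ):ℂ)) = 1 := by
      rw [show Complex.I * b * ((2*Real.pi : ℝ):ℂ) = (b : ℤ) * (2 * Real.pi * Complex.I) by push_cast; ring]
      exact Complex.exp_int_mul_two_pi_mul_I b
    rw [this]
    simp

lemma aux_pi_integral {ι : Type*} [Fintype ι] (g : ι → ℝ → ℂ) :
    (∫ x : ι → ℝ in Set.univ.pi (fun _ => Set.Icc (0:ℝ) (2*Real.pi)), ∏ i, g i (x i))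
      = ∏ i, ∫ θ in Set.Icc (0:ℝ) (2*Real.pi), g i θ := by
  rw [← MeasureTheory.integral_indicator (MeasurableSet.univ_pi (fun _ => measurableSet_Icc))]
  have heq : (Set.univ.pi fun _ : ι => Set.Icc (0:ℝ) (2*Real.pi)).indicator (fun x => ∏ i, g i (x i))
      = fun x => ∏ i, (Set.Icc (0:ℝ) (2*Real.pi)).indicator (g i) (x i) := by
    funext x
    by_cases hx : x ∈ Set.univ.pi fun _ : ι => Set.Icc (0:ℝ) (2*Real.pi)
    · rw [Set.indicator_of_mem hx]
      exact Finset.prod_congr rfl fun i _ =>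
        (Set.indicator_of_mem (Set.mem_univ_pi.mp hx i) _).symm
    · rw [Set.indicator_of_notMem hx]
      obtain ⟨i, hi⟩ := not_forall.mp (fun hcon => hx (Set.mem_univ_pi.mpr hcon))
      exact (Finset.prod_eq_zero (Finset.mem_univ i) (Set.indicator_of_notMem hi _)).symm
  rw [heq, MeasureTheory.integral_fintype_prod_volume_eq_prod
    (fun i => (Set.Icc (0:ℝ) (2*Real.pi)).indicator (g i))]
  exact Finset.prod_congr rfl fun i _ => MeasureTheory.integral_indicator measurableSet_Icc


/-- Let `f(φ) = Σ_{s∈S} f_s e^{i s·φ}` be a trigonometric polynomial of degree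
`≤ m`.  Then `(1/T)∫₀^T f(φ + tW) dt` converges, as `T → ∞`, to the resonant average
`⟨f⟩_W(φ) = ∫_{[0,2π]^{n−r}} f(φ + Σ_{j>r} θ_j η^j) ∏ dθ_j/(2π)`, uniformly in `φ ∈ ℝⁿ`. -/
theorem statement8 (n m : ℕ) (W : Fin n → ℝ)
    (A : Set (Fin n → ℤ))
    (hA : A = {s : Fin n → ℤ | (∑ k, |s k|) ≤ (m : ℤ) ∧ (∑ k, (s k : ℝ) * W k) = 0})
    (AR : Submodule ℝ (Fin n → ℝ))
    (hAR : AR = Submodule.span ℝ ((fun (s : Fin n → ℤ) (k : Fin n) => (s k : ℝ)) '' A))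
    (r : ℕ) (hr : r = Module.finrank ℝ AR)
    (ζ : Fin n → Fin n → ℤ)
    (hspan : Submodule.span ℝ
        ((fun (j : Fin n) (k : Fin n) => (ζ j k : ℝ)) '' {j : Fin n | (j : ℕ) < r}) = AR)
    (hdet : (Matrix.of fun i j : Fin n => ζ j i).det = 1 ∨
        (Matrix.of fun i j : Fin n => ζ j i).det = -1)
    (Rmat : Matrix (Fin n) (Fin n) ℝ)
    (hRmat : Rmat = Matrix.of fun i j : Fin n => (ζ j i : ℝ))
    (η : Fin n → Fin n → ℝ)
    (hη : ∀ j : Fin n, η j = Rmat.transpose⁻¹.mulVec (Pi.single j 1))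
    (S : Finset (Fin n → ℤ)) (c : (Fin n → ℤ) → ℂ)
    (hdeg : ∀ s ∈ S, (∑ k, |s k|) ≤ (m : ℤ))
    (f : (Fin n → ℝ) → ℂ)
    (hf : ∀ φ, f φ = ∑ s ∈ S,
        c s * Complex.exp (Complex.I * Complex.ofReal (∑ k, (s k : ℝ) * φ k)))
    (favg : (Fin n → ℝ) → ℂ)
    (hfavg : ∀ φ, favg φ =
        (((2 * Real.pi) ^ (Fintype.card {j : Fin n // r ≤ (j : ℕ)}))⁻¹ : ℝ) •
          ∫ θ : {j : Fin n // r ≤ (j : ℕ)} → ℝ in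
              Set.univ.pi (fun _ => Set.Icc (0:ℝ) (2 * Real.pi)),
            f (fun k => φ k + ∑ j : {j : Fin n // r ≤ (j : ℕ)}, θ j * η (j : Fin n) k)) :
    TendstoUniformly
      (fun (T : ℝ) (φ : Fin n → ℝ) =>
        (1 / T : ℂ) * ∫ t in (0:ℝ)..T, f (fun k => φ k + t * W k))
      favg atTop := by
  classical
  -- matrix setup
  set Z : Matrix (Fin n) (Fin n) ℤ := Matrix.of fun i j : Fin n => ζ j i with hZ
  have hZdet : IsUnit Z.det := by
    rcases hdet with h | h
    · rw [h]; exact isUnit_one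
    · rw [h]; exact isUnit_one.neg
  have hRZ : Rmat = Z.map (Int.cast : ℤ → ℝ) := by
    rw [hRmat]; ext i j; simp [hZ, Matrix.map_apply]
  have hRdet : IsUnit Rmat.det := by
    have hd : Rmat.det = ((Z.det : ℤ) : ℝ) := by
      rw [hRZ]
      exact ((Int.castRingHom ℝ).map_det Z).symm
    rcases hdet with h | h <;> · rw [hd, h]; norm_num
  have hRTdet : IsUnit Rmat.transpose.det := by rw [Matrix.det_transpose]; exact hRdet
  have hZTdet : IsUnit Z.transpose.det := by rw [Matrix.det_transpose]; exact hZdet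
  -- integer vectors u j whose casts are η j
  set u : Fin n → Fin n → ℤ := fun j => Z.transpose⁻¹.mulVec (Pi.single j 1) with hu
  have hZty : ∀ j, Z.transpose.mulVec (u j) = Pi.single j 1 := by
    intro j
    rw [hu, Matrix.mulVec_mulVec, Matrix.mul_nonsing_inv _ hZTdet, Matrix.one_mulVec]
  have hηcast : ∀ j, η j = fun k => ((u j k : ℤ) : ℝ) := by
    intro j
    have hc : Rmat.transpose.mulVec (fun k => ((u j k : ℤ) : ℝ)) = Pi.single j 1 := by
      funext i
      have h0 := congrFun (hZty j) i
      simp only [Matrix.mulVec, dotProduct, Matrix.transpose_apply,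
        Pi.single_apply] at h0 ⊢
      rw [hRZ]
      simp only [Matrix.map_apply]
      exact_mod_cast h0
    have h2 : η j = Rmat.transpose⁻¹.mulVec
        (Rmat.transpose.mulVec fun k => ((u j k : ℤ) : ℝ)) := by
      rw [hc, hη]
    rwa [Matrix.mulVec_mulVec, Matrix.nonsing_inv_mul _ hRTdet, Matrix.one_mulVec] at h2
  -- duality relation
  have fact1 : ∀ i j : Fin n, (∑ k, (ζ i k : ℝ) * η j k) = if i = j then 1 else 0 := by
    intro i j
    have h3 : Rmat.transpose.mulVec (η j) = Pi.single j 1 := by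
      rw [hη, Matrix.mulVec_mulVec, Matrix.mul_nonsing_inv _ hRTdet, Matrix.one_mulVec]
    have h4 := congrFun h3 i
    simp only [Matrix.mulVec, dotProduct, Matrix.transpose_apply, hRmat,
      Matrix.of_apply, Pi.single_apply] at h4
    exact h4
  -- linear functionals v ↦ ∑ v k * w k
  have linfun : ∀ w : Fin n → ℝ, ∃ ℓ : (Fin n → ℝ) →ₗ[ℝ] ℝ, ∀ v, ℓ v = ∑ k, v k * w k := by
    intro w
    refine ⟨{ toFun := fun v => ∑ k, v k * w k,
              map_add' := by intro x y; simp [add_mul, Finset.sum_add_distrib],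
              map_smul' := by intro t x; simp [Finset.mul_sum, mul_assoc] }, fun v => rfl⟩
  -- every element of AR pairs to zero with W
  have hARW : ∀ v ∈ AR, (∑ k, v k * W k) = 0 := by
    obtain ⟨ℓ, hℓ⟩ := linfun W
    intro v hv
    rw [← hℓ]
    have hle : AR ≤ LinearMap.ker ℓ := by
      rw [hAR, Submodule.span_le]
      rintro x ⟨s, hsA, rfl⟩
      rw [hA] at hsA
      simp only [Set.mem_setOf_eq] at hsA
      simp [LinearMap.mem_ker, hℓ, hsA.2]
    simpa using hle hv
  -- elements of AR pair to zero with η j for r ≤ j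
  have fact3 : ∀ v ∈ AR, ∀ j : Fin n, r ≤ (j : ℕ) → (∑ k, v k * η j k) = 0 := by
    intro v hv j hj
    obtain ⟨ℓ, hℓ⟩ := linfun (η j)
    rw [← hℓ]
    have hle : AR ≤ LinearMap.ker ℓ := by
      rw [← hspan, Submodule.span_le]
      rintro x ⟨i, hi, rfl⟩
      simp only [Set.mem_setOf_eq] at hi
      have h6 : ℓ (fun k => (ζ i k : ℝ)) = 0 := by
        rw [hℓ]
        have := fact1 i j
        rw [this, if_neg]
        intro hij; rw [hij] at hi; omega
      simpa [LinearMap.mem_ker] using h6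
    simpa using hle hv
  -- converse: pairing to zero with all η j (r ≤ j) puts v into AR
  have fact2 : ∀ v : Fin n → ℝ,
      (∀ j : Fin n, r ≤ (j : ℕ) → (∑ k, v k * η j k) = 0) → v ∈ AR := by
    intro v hv
    have h5 : ∀ j, (Rmat⁻¹.mulVec v) j = ∑ l, v l * η j l := by
      intro j
      have e1 : (∑ l, v l * η j l)
          = dotProduct v (Rmat.transpose⁻¹.mulVec (Pi.single j 1)) := by
        rw [← hη j]; rfl
      rw [e1, Matrix.dotProduct_mulVec, ← Matrix.transpose_nonsing_inv,
        Matrix.vecMul_transpose, dotProduct_single, mul_one]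
    have h4 : Rmat.mulVec (Rmat⁻¹.mulVec v) = v := by
      rw [Matrix.mulVec_mulVec, Matrix.mul_nonsing_inv _ hRdet, Matrix.one_mulVec]
    have hexp : v = ∑ j : Fin n, (∑ l, v l * η j l) • (fun k => (ζ j k : ℝ)) := by
      funext k
      calc v k = (Rmat.mulVec (Rmat⁻¹.mulVec v)) k := (congrFun h4 k).symm
        _ = ∑ j, Rmat k j * (Rmat⁻¹.mulVec v) j := rfl
        _ = ∑ j, (∑ l, v l * η j l) * (ζ j k : ℝ) := by
            refine Finset.sum_congr rfl fun j _ => ?_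
            rw [h5 j, hRmat]
            simp [mul_comm]
        _ = (∑ j : Fin n, (∑ l, v l * η j l) • (fun k => (ζ j k : ℝ))) k := by
            rw [Finset.sum_apply]
            simp
    rw [← hspan]
    rw [hexp]
    apply Submodule.sum_mem
    intro j _
    by_cases hj : (j : ℕ) < r
    · exact Submodule.smul_mem _ _ (Submodule.subset_span ⟨j, hj, rfl⟩)
    · rw [hv j (not_lt.mp hj), zero_smul]
      exact Submodule.zero_mem _
  -- per-mode data
  set a : (Fin n → ℤ) → ℝ := fun s => ∑ k, (s k : ℝ) * W k with ha
  set e : (Fin n → ℤ) → (Fin n → ℝ) → ℂ :=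
    fun s φ => Complex.exp (Complex.I * Complex.ofReal (∑ k, (s k : ℝ) * φ k)) with he
  set L : (Fin n → ℤ) → ℂ := fun s => if a s = 0 then 1 else 0 with hLdef
  set bint : (Fin n → ℤ) → {j : Fin n // r ≤ (j : ℕ)} → ℤ :=
    fun s j => ∑ k, s k * u (↑j) k with hbint
  have hbcast : ∀ s (j : {j : Fin n // r ≤ (j : ℕ)}),
      ((bint s j : ℤ) : ℝ) = ∑ k, (s k : ℝ) * η (↑j) k := by
    intro s j
    rw [hηcast (↑j), hbint]
    push_cast
    rfl
  have hres : ∀ s ∈ S,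
      ((∀ j : {j : Fin n // r ≤ (j : ℕ)}, bint s j = 0) ↔ a s = 0) := by
    intro s hs
    constructor
    · intro hall
      have hmem : (fun k => (s k : ℝ)) ∈ AR := by
        refine fact2 _ fun j hj => ?_
        have h7 := hbcast s ⟨j, hj⟩
        rw [hall ⟨j, hj⟩] at h7
        simpa using h7.symm
      have := hARW _ hmem
      simpa [ha] using this
    · intro has j
      have hmem : (fun k => (s k : ℝ)) ∈ AR := by
        rw [hAR]
        refine Submodule.subset_span ⟨s, ?_, rfl⟩
        rw [hA]
        exact ⟨hdeg s hs, by simpa [ha] using has⟩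
      have h8 : (∑ k, (s k : ℝ) * η (↑j) k) = 0 := by
        simpa using fact3 _ hmem (↑j) j.2
      have h7 := hbcast s j
      rw [h8] at h7
      exact_mod_cast h7
  -- Step A: time averages
  have hFa : ∀ (T : ℝ) (φ : Fin n → ℝ),
      (1 / T : ℂ) * (∫ t in (0:ℝ)..T, f (fun k => φ k + t * W k))
        = ∑ s ∈ S, c s * e s φ *
            ((1 / T : ℂ) * ∫ t in (0:ℝ)..T, Complex.exp (Complex.I * (a s : ℝ) * (t : ℝ))) := by
    intro T φ
    have h1 : ∀ t : ℝ, f (fun k => φ k + t * W k)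
        = ∑ s ∈ S, (c s * e s φ) *
            Complex.exp (Complex.I * ((a s : ℝ) : ℂ) * ((t : ℝ) : ℂ)) := by
      intro t
      rw [hf]
      refine Finset.sum_congr rfl fun s _ => ?_
      have hsum : (∑ k, (s k : ℝ) * (φ k + t * W k))
          = (∑ k, (s k : ℝ) * φ k) + a s * t := by
        simp only [mul_add, Finset.sum_add_distrib, ha]
        congr 1
        rw [Finset.sum_mul]
        exact Finset.sum_congr rfl fun k _ => by ring
      rw [hsum, he]
      have hc2 : (Complex.I * Complex.ofReal ((∑ k, (s k : ℝ) * φ k) + a s * t))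
          = Complex.I * Complex.ofReal (∑ k, (s k : ℝ) * φ k)
            + Complex.I * ((a s : ℝ) : ℂ) * ((t : ℝ) : ℂ) := by
        push_cast
        ring
      rw [hc2, Complex.exp_add]
      ring
    simp_rw [h1]
    rw [intervalIntegral.integral_finset_sum]
    · rw [Finset.mul_sum]
      refine Finset.sum_congr rfl fun s _ => ?_
      rw [intervalIntegral.integral_const_mul]
      ring
    · intro s _
      apply Continuous.intervalIntegrable
      exact continuous_const.mul (Complex.continuous_exp.comp
        (continuous_const.mul Complex.continuous_ofReal))
  -- Step B: the resonant average
  have hB : ∀ φ, favg φ = ∑ s ∈ S, c s * e s φ * L s := by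
    intro φ
    rw [hfavg]
    have h1 : ∀ θ : {j : Fin n // r ≤ (j : ℕ)} → ℝ,
        f (fun k => φ k + ∑ j : {j : Fin n // r ≤ (j : ℕ)}, θ j * η (↑j) k)
          = ∑ s ∈ S, (c s * e s φ) *
              ∏ j : {j : Fin n // r ≤ (j : ℕ)},
                Complex.exp (Complex.I * ((bint s j : ℤ) : ℂ) * ((θ j : ℝ) : ℂ)) := by
      intro θ
      rw [hf]
      refine Finset.sum_congr rfl fun s _ => ?_
      have hexp2 : (∑ k, (s k : ℝ) * (φ k + ∑ j : {j : Fin n // r ≤ (j : ℕ)}, θ j * η (↑j) k))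
          = (∑ k, (s k : ℝ) * φ k)
            + ∑ j : {j : Fin n // r ≤ (j : ℕ)}, ((bint s j : ℤ) : ℝ) * θ j := by
        simp only [mul_add, Finset.sum_add_distrib]
        congr 1
        simp_rw [Finset.mul_sum]
        rw [Finset.sum_comm]
        refine Finset.sum_congr rfl fun j _ => ?_
        rw [hbcast s j, Finset.sum_mul]
        exact Finset.sum_congr rfl fun k _ => by ring
      rw [hexp2, he]
      have hsplit : (Complex.I * Complex.ofReal ((∑ k, (s k : ℝ) * φ k)
            + ∑ j : {j : Fin n // r ≤ (j : ℕ)}, ((bint s j : ℤ) : ℝ) * θ j))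
          = Complex.I * Complex.ofReal (∑ k, (s k : ℝ) * φ k)
            + ∑ j : {j : Fin n // r ≤ (j : ℕ)},
                Complex.I * ((bint s j : ℤ) : ℂ) * ((θ j : ℝ) : ℂ) := by
        push_cast
        rw [mul_add]
        congr 1
        rw [Finset.mul_sum]
        exact Finset.sum_congr rfl fun j _ => by ring
      rw [hsplit, Complex.exp_add, Complex.exp_sum]
      ring
    simp_rw [h1]
    have hintg : ∀ s ∈ S, MeasureTheory.IntegrableOn
        (fun θ : {j : Fin n // r ≤ (j : ℕ)} → ℝ => (c s * e s φ) *
          ∏ j : {j : Fin n // r ≤ (j : ℕ)},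
            Complex.exp (Complex.I * ((bint s j : ℤ) : ℂ) * ((θ j : ℝ) : ℂ)))
        (Set.univ.pi fun _ => Set.Icc (0:ℝ) (2 * Real.pi)) := by
      intro s _
      apply ContinuousOn.integrableOn_compact (isCompact_univ_pi fun _ => isCompact_Icc)
      apply Continuous.continuousOn
      refine continuous_const.mul (continuous_finset_prod _ fun j _ => ?_)
      exact Complex.continuous_exp.comp
        (continuous_const.mul (Complex.continuous_ofReal.comp (continuous_apply j)))
    rw [MeasureTheory.integral_finset_sum S hintg]
    have hint : ∀ s ∈ S,
        (∫ θ : {j : Fin n // r ≤ (j : ℕ)} → ℝ in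
            Set.univ.pi fun _ => Set.Icc (0:ℝ) (2 * Real.pi),
          (c s * e s φ) * ∏ j : {j : Fin n // r ≤ (j : ℕ)},
            Complex.exp (Complex.I * ((bint s j : ℤ) : ℂ) * ((θ j : ℝ) : ℂ)))
          = (c s * e s φ) * ∏ j : {j : Fin n // r ≤ (j : ℕ)},
              (if bint s j = 0 then ((2 * Real.pi : ℝ) : ℂ) else 0) := by
      intro s _
      rw [MeasureTheory.integral_const_mul]
      congr 1
      rw [aux_pi_integral (g := fun (j : {j : Fin n // r ≤ (j : ℕ)}) (θ : ℝ) =>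
        Complex.exp (Complex.I * ((bint s j : ℤ) : ℂ) * ((θ : ℝ) : ℂ)))]
      exact Finset.prod_congr rfl fun j _ => aux_circle (bint s j)
    rw [Finset.sum_congr rfl hint, Finset.smul_sum]
    refine Finset.sum_congr rfl fun s hs => ?_
    by_cases hall : ∀ j : {j : Fin n // r ≤ (j : ℕ)}, bint s j = 0
    · have hprod : (∏ j : {j : Fin n // r ≤ (j : ℕ)},
          (if bint s j = 0 then ((2 * Real.pi : ℝ) : ℂ) else 0))
            = ((2 * Real.pi : ℝ) : ℂ) ^ (Fintype.card {j : Fin n // r ≤ (j : ℕ)}) := by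
        rw [Finset.prod_congr rfl fun j _ => if_pos (hall j), Finset.prod_const,
          Finset.card_univ]
      have haz : a s = 0 := (hres s hs).mp hall
      have hL1 : L s = 1 := by rw [hLdef]; simp [haz]
      rw [hprod, hL1, mul_one]
      have hne : (((2 * Real.pi) ^ (Fintype.card {j : Fin n // r ≤ (j : ℕ)}) : ℝ) : ℂ) ≠ 0 :=
        Complex.ofReal_ne_zero.mpr (by positivity)
      rw [Complex.real_smul]
      push_cast at hne ⊢
      field_simp
    · obtain ⟨j, hj⟩ := not_forall.mp hall
      have hprod : (∏ j : {j : Fin n // r ≤ (j : ℕ)},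
          (if bint s j = 0 then ((2 * Real.pi : ℝ) : ℂ) else 0)) = 0 :=
        Finset.prod_eq_zero (Finset.mem_univ j) (if_neg hj)
      have haz : a s ≠ 0 := fun h => hj ((hres s hs).mpr h j)
      have hL0 : L s = 0 := by rw [hLdef]; simp [haz]
      rw [hprod, hL0]
      simp
  -- Step C: uniform convergence
  have hD : Tendsto (fun T : ℝ => ∑ s ∈ S, ‖c s‖ *
      dist ((1 / T : ℂ) * ∫ t in (0:ℝ)..T,
        Complex.exp (Complex.I * (a s : ℝ) * (t : ℝ))) (L s)) atTop (nhds 0) := by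
    have h0 : (0 : ℝ) = ∑ s ∈ S, ‖c s‖ * 0 := by simp
    rw [h0]
    refine tendsto_finset_sum _ fun s _ => ?_
    refine Tendsto.const_mul _ ?_
    have := (aux_time_avg (a s)).dist (tendsto_const_nhds (x := L s))
    simpa [hLdef] using this
  rw [Metric.tendstoUniformly_iff]
  intro ε hε
  filter_upwards [hD.eventually_lt_const hε] with T hT
  intro φ
  rw [dist_eq_norm, hB φ, hFa T φ, ← Finset.sum_sub_distrib]
  calc ‖∑ s ∈ S, (c s * e s φ * L s - c s * e s φ *
        ((1 / T : ℂ) * ∫ t in (0:ℝ)..T, Complex.exp (Complex.I * (a s : ℝ) * (t : ℝ))))‖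
      ≤ ∑ s ∈ S, ‖c s * e s φ * L s - c s * e s φ *
        ((1 / T : ℂ) * ∫ t in (0:ℝ)..T, Complex.exp (Complex.I * (a s : ℝ) * (t : ℝ)))‖ :=
        norm_sum_le _ _
    _ = ∑ s ∈ S, ‖c s‖ * dist ((1 / T : ℂ) * ∫ t in (0:ℝ)..T,
          Complex.exp (Complex.I * (a s : ℝ) * (t : ℝ))) (L s) := by
        refine Finset.sum_congr rfl fun s _ => ?_
        rw [← mul_sub, norm_mul, norm_mul, he]
        rw [aux_norm_exp, mul_one, dist_eq_norm, norm_sub_rev]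
    _ < ε := hT
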